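/- arXiv:1605.02585 — 2 statements merged into one kernel-verified Lean document; each statement's English description precedes it below -/
import Mathlib

section
/- Let (Ω, F, P) be a probability space with a filtration (F_n)_{n≥0}, and let (y_n)_{n≥0} be a sequence of random vectors in a finite-dimensional normed space, adapted to (F_n), with each ‖y_n − y*‖ integrable, where y* is a fixed point of the space. Let u > 0 and D ≥ 0 be constants, and suppose that for every n, almost surely E[‖y_{n+1} − y*‖ | F_n] ≤ ‖y_n − y*‖ − u on the event {‖y_n − y*‖ ≥ D}, and E[‖y_{n+1} − y*‖ | F_n] ≤ ‖y_n − y*‖ on the complementary event. Define the stopping time N_D = inf{ n : ‖y_n − y*‖ ≤ D }. Then E[N_D] ≤ E[‖y_0 − y*‖] / u. -/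
open MeasureTheory Filter
open scoped ENNReal

/-- Drift-based expected hitting-time bound: if an adapted sequence `y` in a
finite-dimensional normed space satisfies the conditional drift condition
`E[‖y_{n+1} − y*‖ | F_n] ≤ ‖y_n − y*‖ − u` on `{‖y_n − y*‖ ≥ D}` (and
`E[‖y_{n+1} − y*‖ | F_n] ≤ ‖y_n − y*‖` otherwise), then the stopping time
`N_D = inf{n : ‖y_n − y*‖ ≤ D}` satisfies `E[N_D] ≤ E[‖y_0 − y*‖] / u`. -/
theorem drift_expected_hitting_time
    {Ω : Type*} {m0 : MeasurableSpace Ω} {P : Measure Ω} [IsProbabilityMeasure P]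
    (F : Filtration ℕ m0)
    {E : Type*} [NormedAddCommGroup E] [NormedSpace ℝ E] [FiniteDimensional ℝ E]
    (y : ℕ → Ω → E) (ystar : E)
    (hadapted : StronglyAdapted F y)
    (hint : ∀ n, Integrable (fun ω => ‖y n ω - ystar‖) P)
    (u D : ℝ) (hu : 0 < u) (hD : 0 ≤ D)
    (hdrift : ∀ n, ∀ᵐ ω ∂P,
      (D ≤ ‖y n ω - ystar‖ →
        (P[(fun ω' => ‖y (n + 1) ω' - ystar‖) | F n]) ω ≤ ‖y n ω - ystar‖ - u) ∧
      (‖y n ω - ystar‖ < D →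
        (P[(fun ω' => ‖y (n + 1) ω' - ystar‖) | F n]) ω ≤ ‖y n ω - ystar‖)) :
    ∫⁻ ω, (⨅ n ∈ {n : ℕ | ‖y n ω - ystar‖ ≤ D}, (n : ℝ≥0∞)) ∂P
      ≤ ENNReal.ofReal ((∫ ω, ‖y 0 ω - ystar‖ ∂P) / u) := by
  classical
  set X : ℕ → Ω → ℝ := fun n ω => ‖y n ω - ystar‖ with hXdef
  set A : ℕ → Set Ω := fun k => {ω | ∀ j ≤ k, D < X j ω} with hAdef
  -- measurability of X n w.r.t. F n
  have hXmeas : ∀ n, Measurable[F n] (X n) := by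
    intro n
    exact ((hadapted n).sub stronglyMeasurable_const).norm.measurable
  have hAmeasF : ∀ k, MeasurableSet[F k] (A k) := by
    intro k
    have : A k = ⋂ j ∈ Finset.range (k + 1), {ω | D < X j ω} := by
      ext ω
      simp only [Set.mem_iInter, Finset.mem_range, Nat.lt_succ_iff, hAdef, Set.mem_setOf_eq]
    rw [this]
    refine MeasurableSet.biInter (Set.to_countable _) fun j hj => ?_
    have hjk : j ≤ k := Nat.lt_succ_iff.mp (Finset.mem_range.mp hj)
    exact (F.mono hjk) _ (measurableSet_lt measurable_const (hXmeas j))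
  have hAmeas : ∀ k, MeasurableSet (A k) := fun k => F.le k _ (hAmeasF k)
  have hAmono : ∀ k, A (k + 1) ⊆ A k := by
    intro k ω hω j hj
    exact hω j (hj.trans (Nat.le_succ k))
  have hXnonneg : ∀ n ω, 0 ≤ X n ω := fun n ω => norm_nonneg _
  -- key recursion for set integrals
  have key : ∀ k, (∫ ω in A (k + 1), X (k + 1) ω ∂P) + u * (P (A k)).toReal
      ≤ ∫ ω in A k, X k ω ∂P := by
    intro k
    have h4 : (∫ ω in A (k + 1), X (k + 1) ω ∂P) ≤ ∫ ω in A k, X (k + 1) ω ∂P :=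
      setIntegral_mono_set ((hint (k + 1)).integrableOn)
        (Eventually.of_forall fun ω => hXnonneg (k + 1) ω)
        (HasSubset.Subset.eventuallyLE (hAmono k))
    have h1 : (∫ ω in A k, X (k + 1) ω ∂P) = ∫ ω in A k, (P[X (k + 1)|F k]) ω ∂P :=
      (setIntegral_condExp (F.le k) (hint (k + 1)) (hAmeasF k)).symm
    have h2 : (∫ ω in A k, (P[X (k + 1)|F k]) ω ∂P)
        ≤ ∫ ω in A k, (X k ω - u) ∂P := by
      refine setIntegral_mono_on_ae (integrable_condExp.integrableOn)
        (((hint k).sub (integrable_const u)).integrableOn) (hAmeas k) ?_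
      filter_upwards [hdrift k] with ω hω hmem
      exact hω.1 (le_of_lt (hmem k le_rfl))
    have h3 : (∫ ω in A k, (X k ω - u) ∂P)
        = (∫ ω in A k, X k ω ∂P) - u * (P (A k)).toReal := by
      rw [integral_sub ((hint k).integrableOn) (integrableOn_const ?_)]
      · rw [setIntegral_const, smul_eq_mul, mul_comm, measureReal_def]
      · exact measure_ne_top P _
    have := (h4.trans (h1.le.trans (h2.trans h3.le)))
    linarith
  have bnonneg : ∀ k, 0 ≤ ∫ ω in A k, X k ω ∂P := fun k =>
    setIntegral_nonneg (hAmeas k) fun ω _ => hXnonneg k ω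
  have b0le : (∫ ω in A 0, X 0 ω ∂P) ≤ ∫ ω, X 0 ω ∂P :=
    setIntegral_le_integral (hint 0) (Eventually.of_forall fun ω => hXnonneg 0 ω)
  -- partial sums bound
  have partialsum : ∀ n, u * ∑ k ∈ Finset.range n, (P (A k)).toReal
      + (∫ ω in A n, X n ω ∂P) ≤ ∫ ω in A 0, X 0 ω ∂P := by
    intro n
    induction n with
    | zero => simp
    | succ n ih =>
      have := key n
      rw [Finset.sum_range_succ]
      linarith
  have psum : ∀ n, u * ∑ k ∈ Finset.range n, (P (A k)).toReal ≤ ∫ ω, X 0 ω ∂P := by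
    intro n
    have := partialsum n
    have := bnonneg n
    linarith
  -- sum of measures bound (in ℝ≥0∞)
  have sumbound : (∑' k, P (A k)) ≤ ENNReal.ofReal ((∫ ω, X 0 ω ∂P) / u) := by
    rw [ENNReal.tsum_eq_iSup_nat]
    refine iSup_le fun n => ?_
    have heq : (∑ k ∈ Finset.range n, P (A k))
        = ENNReal.ofReal (∑ k ∈ Finset.range n, (P (A k)).toReal) := by
      rw [ENNReal.ofReal_sum_of_nonneg fun k _ => ENNReal.toReal_nonneg]
      exact Finset.sum_congr rfl fun k _ =>
        (ENNReal.ofReal_toReal (measure_ne_top P _)).symm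
    rw [heq]
    refine ENNReal.ofReal_le_ofReal ?_
    rw [le_div_iff₀ hu]
    calc (∑ k ∈ Finset.range n, (P (A k)).toReal) * u
        = u * ∑ k ∈ Finset.range n, (P (A k)).toReal := mul_comm _ _
      _ ≤ ∫ ω, X 0 ω ∂P := psum n
  -- pointwise bound of the hitting time by the sum of indicators
  have hpt : ∀ ω, (⨅ n ∈ {n : ℕ | X n ω ≤ D}, (n : ℝ≥0∞))
      ≤ ∑' k, (A k).indicator (fun _ => (1 : ℝ≥0∞)) ω := by
    intro ω
    by_cases hS : ∃ n, X n ω ≤ D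
    · set m := Nat.find hS with hm
      have hmem : X m ω ≤ D := Nat.find_spec hS
      have h1 : (⨅ n ∈ {n : ℕ | X n ω ≤ D}, (n : ℝ≥0∞)) ≤ (m : ℝ≥0∞) :=
        biInf_le _ hmem
      refine h1.trans ?_
      have h2 : ∀ k ∈ Finset.range m, (A k).indicator (fun _ => (1 : ℝ≥0∞)) ω = 1 := by
        intro k hk
        have hk' : k < m := Finset.mem_range.mp hk
        have : ω ∈ A k := by
          intro j hj
          have : ¬ X j ω ≤ D := Nat.find_min hS (lt_of_le_of_lt hj hk')
          linarith
        simp [Set.indicator_of_mem this]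
      calc (m : ℝ≥0∞) = ∑ k ∈ Finset.range m, (A k).indicator (fun _ => (1 : ℝ≥0∞)) ω := by
            rw [Finset.sum_congr rfl h2]; simp
        _ ≤ ∑' k, (A k).indicator (fun _ => (1 : ℝ≥0∞)) ω := ENNReal.sum_le_tsum _
    · push_neg at hS
      have hA : ∀ k, ω ∈ A k := fun k j _ => hS j
      have : (∑' k, (A k).indicator (fun _ => (1 : ℝ≥0∞)) ω) = ∑' _ : ℕ, (1 : ℝ≥0∞) := by
        refine tsum_congr fun k => ?_
        simp [Set.indicator_of_mem (hA k)]
      rw [this, ENNReal.tsum_const_eq_top_of_ne_zero one_ne_zero]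
      exact le_top
  -- conclude
  calc ∫⁻ ω, (⨅ n ∈ {n : ℕ | ‖y n ω - ystar‖ ≤ D}, (n : ℝ≥0∞)) ∂P
      ≤ ∫⁻ ω, ∑' k, (A k).indicator (fun _ => (1 : ℝ≥0∞)) ω ∂P := lintegral_mono hpt
    _ = ∑' k, ∫⁻ ω, (A k).indicator (fun _ => (1 : ℝ≥0∞)) ω ∂P :=
        lintegral_tsum fun k => (measurable_const.indicator (hAmeas k)).aemeasurable
    _ = ∑' k, P (A k) := by
        refine tsum_congr fun k => ?_
        exact lintegral_indicator_one (hAmeas k)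
    _ ≤ ENNReal.ofReal ((∫ ω, X 0 ω ∂P) / u) := sumbound
end

section
/- Let (Ω, F, P) be a probability space with a filtration (F_t)_{t≥0}, and let (d(t))_{t≥0} be a real-valued adapted integrable process. Let N ≥ 1 be an integer, γ ∈ ℝ, η > 0, and D ≥ 0. Suppose that for every t, almost surely E[|d(t+N) − γ| | F_t] ≤ |d(t) − γ| − η on the event {|d(t) − γ| ≥ D}, and E[|d(t+N) − γ| | F_t] ≤ |d(t) − γ| on the complementary event. Define T_D = inf{ t : t is a multiple of N and |d(t) − γ| ≤ D }. Then E[T_D] ≤ N · E[|d(0) − γ|] / η. -/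
open MeasureTheory Filter
open scoped ENNReal

/-- N-step drift hitting-time bound: if a real-valued adapted integrable process
`d` contracts toward `γ` by at least `η` every `N` steps whenever it is at
distance at least `D` from `γ` (and does not expand otherwise), then the time
`T_D = inf{t : N ∣ t ∧ |d(t) − γ| ≤ D}` satisfies
`E[T_D] ≤ N · E[|d(0) − γ|] / η`. -/
theorem N_step_drift_hitting_time
    {Ω : Type*} {m0 : MeasurableSpace Ω} {P : Measure Ω} [IsProbabilityMeasure P]
    (F : Filtration ℕ m0)
    (d : ℕ → Ω → ℝ)
    (hadapted : Adapted F d)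
    (hint : ∀ t, Integrable (d t) P)
    (N : ℕ) (hN : 1 ≤ N)
    (γ η D : ℝ) (hη : 0 < η) (hD : 0 ≤ D)
    (hdrift : ∀ t, ∀ᵐ ω ∂P,
      (D ≤ |d t ω - γ| →
        (P[(fun ω' => |d (t + N) ω' - γ|) | F t]) ω ≤ |d t ω - γ| - η) ∧
      (|d t ω - γ| < D →
        (P[(fun ω' => |d (t + N) ω' - γ|) | F t]) ω ≤ |d t ω - γ|)) :
    ∫⁻ ω, (⨅ t ∈ {t : ℕ | N ∣ t ∧ |d t ω - γ| ≤ D}, (t : ℝ≥0∞)) ∂P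
      ≤ ENNReal.ofReal ((N : ℝ) * (∫ ω, |d 0 ω - γ| ∂P) / η) := by
  classical
  set f : ℕ → Ω → ℝ := fun k ω => |d (k * N) ω - γ| with hfdef
  have hfint : ∀ k, Integrable (f k) P :=
    fun k => ((hint (k * N)).sub (integrable_const γ)).abs
  have hfnonneg : ∀ k ω, 0 ≤ f k ω := fun k ω => abs_nonneg _
  have hfmeas : ∀ k, Measurable[F (k * N)] (f k) := by
    intro k
    letI : MeasurableSpace Ω := F (k * N)
    exact ((show Measurable (d (k * N)) from hadapted (k * N)).sub measurable_const).abs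
  set S : ℕ → Set Ω := fun k => ⋂ j ∈ Set.Iic k, {ω | D < f j ω} with hSdef
  have hmemS : ∀ k ω, ω ∈ S k ↔ ∀ j ≤ k, D < f j ω := by
    intro k ω; simp [hSdef]
  have hSmeasF : ∀ k, MeasurableSet[F (k * N)] (S k) := by
    intro k
    refine MeasurableSet.biInter (Set.to_countable _) (fun j hj => ?_)
    have h1 : MeasurableSet[F (j * N)] {ω | D < f j ω} :=
      measurableSet_lt measurable_const (hfmeas j)
    exact F.mono (Nat.mul_le_mul_right N hj) _ h1
  have hSmeas : ∀ k, MeasurableSet (S k) := fun k => F.le _ _ (hSmeasF k)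
  have hSanti : ∀ k, S (k + 1) ⊆ S k := by
    intro k ω hω
    rw [hmemS] at hω ⊢
    exact fun j hj => hω j (hj.trans (Nat.le_succ k))
  -- key drift inequality on set integrals
  have key : ∀ k, ∫ ω in S (k+1), f (k+1) ω ∂P + η * (P (S k)).toReal
      ≤ ∫ ω in S k, f k ω ∂P := by
    intro k
    have h1 : ∫ ω in S (k+1), f (k+1) ω ∂P ≤ ∫ ω in S k, f (k+1) ω ∂P :=
      setIntegral_mono_set (hfint (k+1)).integrableOn
        (Filter.Eventually.of_forall fun ω => hfnonneg _ ω)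
        (HasSubset.Subset.eventuallyLE (hSanti k))
    have hfk1 : f (k+1) = fun ω' => |d (k * N + N) ω' - γ| := by
      ext ω; simp [hfdef, Nat.succ_mul]
    have h2 : ∫ ω in S k, f (k+1) ω ∂P
        = ∫ ω in S k, (P[(fun ω' => |d (k * N + N) ω' - γ|) | F (k * N)]) ω ∂P := by
      rw [hfk1]
      exact (setIntegral_condExp (F.le _) (hfk1 ▸ hfint (k+1)) (hSmeasF k)).symm
    have h3 : ∫ ω in S k, (P[(fun ω' => |d (k * N + N) ω' - γ|) | F (k * N)]) ω ∂P
        ≤ ∫ ω in S k, (f k ω - η) ∂P := by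
      refine setIntegral_mono_ae_restrict integrable_condExp.integrableOn
        (((hfint k).sub (integrable_const η)).integrableOn) ?_
      filter_upwards [ae_restrict_of_ae (hdrift (k * N)), ae_restrict_mem (hSmeas k)]
        with ω hω hmem
      have hDle : D ≤ |d (k * N) ω - γ| := le_of_lt ((hmemS k ω).1 hmem k le_rfl)
      exact hω.1 hDle
    have h4 : ∫ ω in S k, (f k ω - η) ∂P
        = ∫ ω in S k, f k ω ∂P - η * (P (S k)).toReal := by
      rw [integral_sub (hfint k).integrableOn
        (integrableOn_const (measure_ne_top P _))]
      simp [integral_const, mul_comm, Measure.real]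
    linarith [h1, h2.le, h3, h4.le, h4.ge]
  have hb0 : ∫ ω in S 0, f 0 ω ∂P ≤ ∫ ω, f 0 ω ∂P :=
    setIntegral_le_integral (hfint 0) (Filter.Eventually.of_forall fun ω => hfnonneg _ ω)
  have hbnonneg : ∀ k, 0 ≤ ∫ ω in S k, f k ω ∂P :=
    fun k => setIntegral_nonneg (hSmeas k) (fun ω _ => hfnonneg _ ω)
  have hsum : ∀ m : ℕ,
      ∫ ω in S m, f m ω ∂P + η * ∑ k ∈ Finset.range m, (P (S k)).toReal
        ≤ ∫ ω, f 0 ω ∂P := by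
    intro m
    induction m with
    | zero => simpa using hb0
    | succ m ih =>
        have := key m
        rw [Finset.sum_range_succ]
        linarith
  have hInonneg : 0 ≤ ∫ ω, f 0 ω ∂P :=
    integral_nonneg fun ω => hfnonneg _ ω
  have hPsum : ∀ m : ℕ, ∑ k ∈ Finset.range m, P (S k)
      ≤ ENNReal.ofReal ((∫ ω, f 0 ω ∂P) / η) := by
    intro m
    have h1 : ∑ k ∈ Finset.range m, (P (S k)).toReal ≤ (∫ ω, f 0 ω ∂P) / η := by
      rw [le_div_iff₀ hη]
      have := hsum m
      have := hbnonneg m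
      linarith [hsum m, hbnonneg m, mul_comm η (∑ k ∈ Finset.range m, (P (S k)).toReal)]
    calc ∑ k ∈ Finset.range m, P (S k)
        = ENNReal.ofReal (∑ k ∈ Finset.range m, (P (S k)).toReal) := by
          rw [ENNReal.ofReal_sum_of_nonneg (fun i _ => ENNReal.toReal_nonneg)]
          exact Finset.sum_congr rfl fun k _ =>
            (ENNReal.ofReal_toReal (measure_ne_top P _)).symm
      _ ≤ ENNReal.ofReal ((∫ ω, f 0 ω ∂P) / η) := ENNReal.ofReal_le_ofReal h1
  have htsum : ∑' k, P (S k) ≤ ENNReal.ofReal ((∫ ω, f 0 ω ∂P) / η) := by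
    rw [ENNReal.tsum_eq_iSup_nat]
    exact iSup_le hPsum
  -- pointwise bound on the hitting time
  have hpt : ∀ ω, (⨅ t ∈ {t : ℕ | N ∣ t ∧ |d t ω - γ| ≤ D}, (t : ℝ≥0∞))
      ≤ (N : ℝ≥0∞) * ∑' k, (S k).indicator (fun _ => (1 : ℝ≥0∞)) ω := by
    intro ω
    by_cases hω : ∀ k, ω ∈ S k
    · have hT : ∑' k, (S k).indicator (fun _ => (1 : ℝ≥0∞)) ω = ⊤ := by
        have : (fun k => (S k).indicator (fun _ => (1 : ℝ≥0∞)) ω)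
            = fun _ : ℕ => (1 : ℝ≥0∞) := by
          funext k; simp [Set.indicator_of_mem (hω k)]
        rw [this]
        exact ENNReal.tsum_const_eq_top_of_ne_zero one_ne_zero
      rw [hT, ENNReal.mul_top (by exact_mod_cast Nat.one_le_iff_ne_zero.mp hN)]
      exact le_top
    · push_neg at hω
      set k0 := Nat.find hω with hk0
      have hnot : ω ∉ S k0 := Nat.find_spec hω
      rw [hmemS] at hnot
      push_neg at hnot
      obtain ⟨j, hjk0, hjD⟩ := hnot
      have hmem : j * N ∈ {t : ℕ | N ∣ t ∧ |d t ω - γ| ≤ D} :=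
        ⟨dvd_mul_left N j, hjD⟩
      have hle1 : (⨅ t ∈ {t : ℕ | N ∣ t ∧ |d t ω - γ| ≤ D}, (t : ℝ≥0∞))
          ≤ ((j * N : ℕ) : ℝ≥0∞) :=
        iInf_le_of_le (j * N) (iInf_le_of_le hmem le_rfl)
      have hle2 : ((k0 : ℝ≥0∞)) ≤ ∑' k, (S k).indicator (fun _ => (1 : ℝ≥0∞)) ω := by
        have hps : ∑ k ∈ Finset.range k0, (S k).indicator (fun _ => (1 : ℝ≥0∞)) ω
            = (k0 : ℝ≥0∞) := by
          have hone : ∀ k ∈ Finset.range k0,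
              (S k).indicator (fun _ => (1 : ℝ≥0∞)) ω = 1 := by
            intro k hk
            have hmem2 : ω ∈ S k :=
              not_not.mp (Nat.find_min hω (Finset.mem_range.mp hk))
            simp [Set.indicator_of_mem hmem2]
          rw [Finset.sum_congr rfl hone]
          simp
        calc ((k0 : ℝ≥0∞)) = ∑ k ∈ Finset.range k0,
              (S k).indicator (fun _ => (1 : ℝ≥0∞)) ω := hps.symm
          _ ≤ ∑' k, (S k).indicator (fun _ => (1 : ℝ≥0∞)) ω :=
              ENNReal.sum_le_tsum _
      calc (⨅ t ∈ {t : ℕ | N ∣ t ∧ |d t ω - γ| ≤ D}, (t : ℝ≥0∞))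
          ≤ ((j * N : ℕ) : ℝ≥0∞) := hle1
        _ = (N : ℝ≥0∞) * (j : ℝ≥0∞) := by push_cast; ring
        _ ≤ (N : ℝ≥0∞) * (k0 : ℝ≥0∞) := by
            exact mul_le_mul_right (by exact_mod_cast hjk0) _
        _ ≤ (N : ℝ≥0∞) * ∑' k, (S k).indicator (fun _ => (1 : ℝ≥0∞)) ω :=
            mul_le_mul_right hle2 _
  calc ∫⁻ ω, (⨅ t ∈ {t : ℕ | N ∣ t ∧ |d t ω - γ| ≤ D}, (t : ℝ≥0∞)) ∂P
      ≤ ∫⁻ ω, (N : ℝ≥0∞) * ∑' k, (S k).indicator (fun _ => (1 : ℝ≥0∞)) ω ∂P :=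
        lintegral_mono hpt
    _ = (N : ℝ≥0∞) * ∫⁻ ω, ∑' k, (S k).indicator (fun _ => (1 : ℝ≥0∞)) ω ∂P :=
        lintegral_const_mul' _ _ (by simp)
    _ = (N : ℝ≥0∞) * ∑' k, ∫⁻ ω, (S k).indicator (fun _ => (1 : ℝ≥0∞)) ω ∂P := by
        rw [lintegral_tsum fun k =>
          ((measurable_const.indicator (hSmeas k)).aemeasurable)]
    _ = (N : ℝ≥0∞) * ∑' k, P (S k) := by
        congr 1
        exact tsum_congr fun k => lintegral_indicator_one (hSmeas k)
    _ ≤ (N : ℝ≥0∞) * ENNReal.ofReal ((∫ ω, f 0 ω ∂P) / η) :=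
        mul_le_mul_right htsum _
    _ = ENNReal.ofReal ((N : ℝ) * (∫ ω, |d 0 ω - γ| ∂P) / η) := by
        have hf0 : (fun ω => f 0 ω) = fun ω => |d 0 ω - γ| := by
          funext ω; simp [hfdef]
        rw [hf0, ← ENNReal.ofReal_natCast N,
          ← ENNReal.ofReal_mul (by positivity : (0:ℝ) ≤ (N:ℝ)), mul_div_assoc]
end
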